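/- Let T be a numerical semigroup with α-rectangular Apéry set, and let d_1, d_2 be coprime positive integers with d_1 ∈ T not a minimal generator of T, d_1 ∉ Ap(T, m(T)), d_2 > 1, and d_1 > d_2·m(T). Then the gluing S = d_2·T + d_1·ℕ has α-rectangular Apéry set. -/
import Mathlib


/-- A numerical semigroup: a subset of ℕ containing 0, closed under addition,
with finite complement. -/
structure NumSgp where
  carrier : Set ℕ
  zero_mem : 0 ∈ carrier
  add_mem : ∀ a ∈ carrier, ∀ b ∈ carrier, a + b ∈ carrier
  cofinite : Set.Finite carrierᶜ

namespace NumSgp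

/-- The multiplicity: the smallest positive element. -/
noncomputable def mult (S : NumSgp) : ℕ := sInf {s | s ∈ S.carrier ∧ s ≠ 0}

/-- The Apéry set of `S` with respect to `n`: elements `s ∈ S` with `s - n ∉ S`. -/
def Apery (S : NumSgp) (n : ℕ) : Set ℕ :=
  {s | s ∈ S.carrier ∧ ¬ ∃ t ∈ S.carrier, s = t + n}

/-- `s ⪯ t` : there is `u ∈ S` with `t = s + u`. -/
def sle (S : NumSgp) (s t : ℕ) : Prop := ∃ u ∈ S.carrier, t = s + u

/-- Membership for integers. -/
def memZ (S : NumSgp) (x : ℤ) : Prop := ∃ n ∈ S.carrier, (n : ℤ) = x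

/-- `f` is the Frobenius number of `S`: the largest integer not in `S`. -/
def IsFrob (S : NumSgp) (f : ℤ) : Prop := ¬ S.memZ f ∧ ∀ x : ℤ, f < x → S.memZ x

/-- `S` is symmetric: `x ∈ S ↔ f - x ∉ S` for all integers `x`. -/
def Symm (S : NumSgp) : Prop :=
  ∃ f : ℤ, S.IsFrob f ∧ ∀ x : ℤ, S.memZ x ↔ ¬ S.memZ (f - x)

/-- `s` is a minimal generator (irreducible element) of `S`. -/
def IsMinGen (S : NumSgp) (s : ℕ) : Prop :=
  s ∈ S.carrier ∧ s ≠ 0 ∧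
    ¬ ∃ a ∈ S.carrier, ∃ b ∈ S.carrier, a ≠ 0 ∧ b ≠ 0 ∧ s = a + b

/-- `g : Fin ν → ℕ` enumerates the minimal generators in increasing order. -/
def MinGens (S : NumSgp) {ν : ℕ} (g : Fin ν → ℕ) : Prop :=
  StrictMono g ∧ Set.range g = {s | S.IsMinGen s}

/-- The order of `s`: the maximal total coefficient sum over representations of `s`
in terms of the generators `g`. -/
noncomputable def ord {ν : ℕ} (g : Fin ν → ℕ) (s : ℕ) : ℕ :=
  sSup {k | ∃ lam : Fin ν → ℕ, s = ∑ i, lam i * g i ∧ k = ∑ i, lam i}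

/-- `s` has a unique representation in terms of the generators `g`. -/
def UniqueRep {ν : ℕ} (g : Fin ν → ℕ) (s : ℕ) : Prop :=
  ∃! lam : Fin ν → ℕ, s = ∑ i, lam i * g i

/-- `s` has a unique maximal representation in terms of the generators `g`. -/
def UniqueMaxRep {ν : ℕ} (g : Fin ν → ℕ) (s : ℕ) : Prop :=
  ∃! lam : Fin ν → ℕ, s = ∑ i, lam i * g i ∧ ∑ i, lam i = ord g s

/-- The submonoid of ℕ generated by the generators `g j` with `j < i`. -/
def genBy {ν : ℕ} (g : Fin ν → ℕ) (i : Fin ν) : Set ℕ :=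
  {s | ∃ lam : Fin ν → ℕ, (∀ j, ¬ j < i → lam j = 0) ∧ s = ∑ j, lam j * g j}

/-- `τ_i = min {h | h·g_i ∈ ⟨g_1, …, g_{i-1}⟩} - 1`. -/
noncomputable def tau {ν : ℕ} (g : Fin ν → ℕ) (i : Fin ν) : ℕ :=
  sInf {h | h * g i ∈ genBy g i} - 1

/-- `α_i = max {h | h·g_i ∈ Ap(S, m)}`. -/
noncomputable def alpha (S : NumSgp) {ν : ℕ} (g : Fin ν → ℕ) (i : Fin ν) : ℕ :=
  sSup {h | h * g i ∈ S.Apery S.mult}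

/-- `β_i = max {h | h·g_i ∈ Ap(S, m) and ord(h·g_i) = h}`. -/
noncomputable def beta (S : NumSgp) {ν : ℕ} (g : Fin ν → ℕ) (i : Fin ν) : ℕ :=
  sSup {h | h * g i ∈ S.Apery S.mult ∧ ord g (h * g i) = h}

/-- `γ_i`. -/
noncomputable def gamma (S : NumSgp) {ν : ℕ} (g : Fin ν → ℕ) (i : Fin ν) : ℕ :=
  sSup {h | h * g i ∈ S.Apery S.mult ∧ ord g (h * g i) = h ∧ UniqueMaxRep g (h * g i)}

/-- The "rectangle" `{Σ_{i ≥ 2} λ_i g_i | 0 ≤ λ_i ≤ c_i}` (indices here start at 0,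
the first generator does not appear). -/
def rect {ν : ℕ} (g c : Fin ν → ℕ) : Set ℕ :=
  {s | ∃ lam : Fin ν → ℕ, (∀ i, i.val = 0 → lam i = 0) ∧ (∀ i, lam i ≤ c i) ∧
    s = ∑ i, lam i * g i}

/-- `Π_{i ≥ 2} (c_i + 1)` (the first index excluded). -/
def piProd {ν : ℕ} (c : Fin ν → ℕ) : ℕ :=
  ∏ i ∈ Finset.univ.filter (fun i : Fin ν => i.val ≠ 0), (c i + 1)

/-- `S` is telescopic. -/
def Telescopic (S : NumSgp) : Prop :=
  ∃ (ν : ℕ) (g : Fin ν → ℕ), S.MinGens g ∧ S.Apery S.mult = rect g (tau g)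

/-- `S` has α-rectangular Apéry set. -/
def AlphaRect (S : NumSgp) : Prop :=
  ∃ (ν : ℕ) (g : Fin ν → ℕ), S.MinGens g ∧ S.Apery S.mult = rect g (S.alpha g)

/-- `S` has γ-rectangular Apéry set. -/
def GammaRect (S : NumSgp) : Prop :=
  ∃ (ν : ℕ) (g : Fin ν → ℕ), S.MinGens g ∧ S.Apery S.mult = rect g (S.gamma g)

/-- `S` is associated to a plane branch: telescopic and `(τ_i+1) g_i < g_{i+1}`. -/
def PlaneBranch (S : NumSgp) : Prop :=
  ∃ (ν : ℕ) (g : Fin ν → ℕ), S.MinGens g ∧ S.Apery S.mult = rect g (tau g) ∧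
    ∀ i : Fin ν, 1 ≤ i.val → ∀ h : i.val + 1 < ν, (tau g i + 1) * g i < g ⟨i.val + 1, h⟩

/-- `S` is free: for some rearrangement `n` of the minimal generators,
`Ap(S, n_1) = {Σ_{i ≥ 2} λ_i n_i | 0 ≤ λ_i ≤ φ_i}`. -/
def Free (S : NumSgp) : Prop :=
  ∃ (ν : ℕ) (hν : 0 < ν) (n : Fin ν → ℕ), Function.Injective n ∧
    Set.range n = {s | S.IsMinGen s} ∧ S.Apery (n ⟨0, hν⟩) = rect n (tau n)

/-- The kernel congruence of the factorization map `λ ↦ Σ λ_i g_i`. -/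
def kerCon {ν : ℕ} (g : Fin ν → ℕ) : AddCon (Fin ν → ℕ) where
  r a b := ∑ i, a i * g i = ∑ i, b i * g i
  iseqv := ⟨fun _ => rfl, Eq.symm, Eq.trans⟩
  add' := by
    intro a b c d h1 h2
    simp only [Pi.add_apply, add_mul, Finset.sum_add_distrib]
    exact congrArg₂ (· + ·) h1 h2

/-- `S` is a complete intersection: it admits a presentation of cardinality `ν - 1`
(the cardinality of any minimal presentation equals `ν - 1`). -/
def CompleteIntersection (S : NumSgp) : Prop :=
  ∃ (ν : ℕ) (g : Fin ν → ℕ), S.MinGens g ∧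
    ∃ ρ : Finset ((Fin ν → ℕ) × (Fin ν → ℕ)), ρ.card = ν - 1 ∧
      addConGen (fun a b => (a, b) ∈ ρ) = kerCon g

end NumSgp

namespace NumSgp

lemma mult_mem_ne (S : NumSgp) : S.mult ∈ S.carrier ∧ S.mult ≠ 0 := by
  have hinf : S.carrier.Infinite := by
    have := S.cofinite
    rw [← compl_compl S.carrier]
    exact Set.Finite.infinite_compl this
  have hne : {s | s ∈ S.carrier ∧ s ≠ 0}.Nonempty := by
    obtain ⟨x, hx⟩ := (hinf.diff (Set.finite_singleton 0)).nonempty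
    exact ⟨x, hx.1, by simpa using hx.2⟩
  exact Nat.sInf_mem hne

lemma mult_le (S : NumSgp) {s : ℕ} (hs : s ∈ S.carrier) (h0 : s ≠ 0) : S.mult ≤ s :=
  Nat.sInf_le ⟨hs, h0⟩

lemma mul_mem (S : NumSgp) {t : ℕ} (ht : t ∈ S.carrier) (n : ℕ) : n * t ∈ S.carrier := by
  induction n with
  | zero => simpa using S.zero_mem
  | succ n ih => rw [Nat.succ_mul]; exact S.add_mem _ ih _ ht

lemma mult_isMinGen (S : NumSgp) : S.IsMinGen S.mult := by
  obtain ⟨hm, h0⟩ := S.mult_mem_ne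
  refine ⟨hm, h0, ?_⟩
  rintro ⟨a, ha, b, hb, ha0, hb0, hab⟩
  have h1 := S.mult_le ha ha0
  have h2 := S.mult_le hb hb0
  omega

lemma key_uniq_aux {d₁ d₂ : ℕ} (hcop : Nat.Coprime d₁ d₂) {a a' b b' : ℕ}
    (hle : b' ≤ b) (hb : b < d₂) (h : d₂ * a + d₁ * b = d₂ * a' + d₁ * b') : b = b' := by
  have hmul : d₁ * b = d₁ * (b - b') + d₁ * b' := by
    rw [← Nat.mul_add]; congr 1; omega
  have h2 : d₂ * a + d₁ * (b - b') = d₂ * a' := by omega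
  have hdvd : d₂ ∣ d₁ * (b - b') := by
    have : d₁ * (b - b') = d₂ * a' - d₂ * a := by omega
    rw [this]
    exact Nat.dvd_sub (Dvd.intro _ rfl) (Dvd.intro _ rfl)
  have hdvd2 : d₂ ∣ (b - b') := (Nat.Coprime.dvd_of_dvd_mul_left hcop.symm hdvd)
  have := Nat.eq_zero_of_dvd_of_lt hdvd2 (by omega)
  omega

lemma key_uniq {d₁ d₂ : ℕ} (hcop : Nat.Coprime d₁ d₂) (hd₂ : 0 < d₂) {u u' j j' : ℕ}
    (hj : j < d₂) (hj' : j' < d₂) (h : d₂ * u + d₁ * j = d₂ * u' + d₁ * j') :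
    u = u' ∧ j = j' := by
  have hjj : j = j' := by
    rcases le_total j' j with hle | hle
    · exact key_uniq_aux hcop hle hj h
    · exact (key_uniq_aux hcop hle hj' h.symm).symm
  subst hjj
  constructor
  · have : d₂ * u = d₂ * u' := by omega
    exact Nat.eq_of_mul_eq_mul_left hd₂ this
  · rfl

lemma sorted_merge {n : ℕ} {α : Type} [Fintype α] [DecidableEq α] (hcard : Fintype.card α = n)
    (h : α → ℕ) (hinj : Function.Injective h) :
    ∃ (g' : Fin n → ℕ) (e : α ≃ Fin n),
      StrictMono g' ∧ Set.range g' = Set.range h ∧ ∀ x, g' (e x) = h x := by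
  classical
  set F : Finset ℕ := Finset.image h Finset.univ with hF
  have hFc : F.card = n := by
    rw [hF, Finset.card_image_of_injective _ hinj, Finset.card_univ, hcard]
  set g' : Fin n → ℕ := fun k => (F.orderIsoOfFin hFc k : ℕ) with hg'
  have hmemF : ∀ x, h x ∈ F := fun x => Finset.mem_image_of_mem _ (Finset.mem_univ x)
  set e0 : α → Fin n := fun x => (F.orderIsoOfFin hFc).symm ⟨h x, hmemF x⟩ with he0
  have hkey : ∀ x, g' (e0 x) = h x := by
    intro x
    simp only [hg', he0, OrderIso.apply_symm_apply]
  have he0inj : Function.Injective e0 := by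
    intro a b hab
    apply hinj
    have := congrArg g' hab
    rwa [hkey, hkey] at this
  have hbij : Function.Bijective e0 :=
    (Fintype.bijective_iff_injective_and_card e0).mpr ⟨he0inj, by simp [hcard]⟩
  refine ⟨g', Equiv.ofBijective e0 hbij, ?_, ?_, hkey⟩
  · intro a b hab
    exact (F.orderIsoOfFin hFc).strictMono hab
  · ext y
    constructor
    · rintro ⟨k, rfl⟩
      have : (g' k : ℕ) ∈ F := (F.orderIsoOfFin hFc k).2
      rw [hF] at this
      obtain ⟨x, _, hx⟩ := Finset.mem_image.mp this
      exact ⟨x, hx⟩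
    · rintro ⟨x, rfl⟩
      exact ⟨e0 x, hkey x⟩

end NumSgp
namespace NumSgp
lemma mul_mem' (S : NumSgp) {t : ℕ} (ht : t ∈ S.carrier) (n : ℕ) : t * n ∈ S.carrier := by
  rw [mul_comm]; exact S.mul_mem ht n
end NumSgp
open NumSgp

/-- If `T` has α-rectangular Apéry set and `d₁, d₂` are coprime with `d₁ ∈ T` not a
minimal generator, `d₁ ∉ Ap(T, m(T))`, `d₂ > 1` and `d₁ > d₂·m(T)`, then the gluing
`S = d₂·T + d₁·ℕ` has α-rectangular Apéry set. -/
theorem stmt_17 (T : NumSgp) (hT : T.AlphaRect) (d₁ d₂ : ℕ) (hcop : Nat.Coprime d₁ d₂)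
    (hd₁T : d₁ ∈ T.carrier) (hd₁gen : ¬ T.IsMinGen d₁) (hd₁Ap : d₁ ∉ T.Apery T.mult)
    (hd₂ : 1 < d₂) (hlt : d₂ * T.mult < d₁) (S : NumSgp)
    (hS : S.carrier = {s | ∃ t ∈ T.carrier, ∃ k : ℕ, s = d₂ * t + d₁ * k}) :
    S.AlphaRect := by
  classical
  obtain ⟨ν, g, ⟨hgmono, hgrange⟩, hApT⟩ := hT
  have hd₂0 : 0 < d₂ := by omega
  obtain ⟨hmT, hm0⟩ := T.mult_mem_ne
  set m := T.mult with hm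
  have hm0' : 0 < m := Nat.pos_of_ne_zero hm0
  have hd₁0 : 0 < d₁ := by omega
  -- membership in S
  have hSmem : ∀ t ∈ T.carrier, ∀ k : ℕ, d₂ * t + d₁ * k ∈ S.carrier := by
    intro t ht k
    rw [hS]; exact ⟨t, ht, k, rfl⟩
  have hSmem' : ∀ x ∈ S.carrier, ∃ t ∈ T.carrier, ∃ k : ℕ, x = d₂ * t + d₁ * k := by
    intro x hx; rwa [hS] at hx
  -- d₂ does not divide d₁
  have hnd : ¬ d₂ ∣ d₁ := by
    intro hdvd
    have : d₂ ∣ Nat.gcd d₁ d₂ := Nat.dvd_gcd hdvd dvd_rfl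
    have h2 := Nat.le_of_dvd one_pos (hcop ▸ this)
    omega
  -- ν is positive, g 0 = mult T
  have hν : 0 < ν := by
    have : m ∈ Set.range g := by rw [hgrange]; exact T.mult_isMinGen
    obtain ⟨i, _⟩ := this
    exact Fin.pos i
  set i0 : Fin ν := ⟨0, hν⟩ with hi0
  have hg0 : g i0 = m := by
    have hmem : m ∈ Set.range g := by rw [hgrange]; exact T.mult_isMinGen
    obtain ⟨i, hi⟩ := hmem
    have hgi0 : T.IsMinGen (g i0) := by
      have : g i0 ∈ Set.range g := ⟨i0, rfl⟩
      rwa [hgrange] at this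
    have h1 : m ≤ g i0 := T.mult_le hgi0.1 hgi0.2.1
    have h2 : g i0 ≤ g i := hgmono.monotone (by simp [hi0, Fin.le_def])
    omega
  -- multiplicity of S
  have hmultS : S.mult = d₂ * m := by
    have hmem : d₂ * m ∈ {s | s ∈ S.carrier ∧ s ≠ 0} := by
      refine ⟨by simpa using hSmem m hmT 0, by positivity⟩
    have hlb : ∀ s ∈ {s | s ∈ S.carrier ∧ s ≠ 0}, d₂ * m ≤ s := by
      rintro s ⟨hs, hs0⟩
      obtain ⟨t, ht, k, rfl⟩ := hSmem' s hs
      rcases Nat.eq_zero_or_pos k with hk | hk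
      · subst hk
        have ht0 : t ≠ 0 := by rintro rfl; simp at hs0
        have h1 : m ≤ t := T.mult_le ht ht0
        have h2 : d₂ * m ≤ d₂ * t := Nat.mul_le_mul_left d₂ h1
        omega
      · have h3 : d₁ * 1 ≤ d₁ * k := Nat.mul_le_mul_left d₁ hk
        omega
    refine le_antisymm (Nat.sInf_le hmem) ?_
    exact hlb _ (Nat.sInf_mem ⟨_, hmem⟩)
  -- canonical form
  have hcanon : ∀ x ∈ S.carrier, ∃ u ∈ T.carrier, ∃ j, j < d₂ ∧ x = d₂ * u + d₁ * j := by
    intro x hx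
    obtain ⟨t, ht, k, rfl⟩ := hSmem' x hx
    refine ⟨t + (k / d₂) * d₁, T.add_mem _ ht _ (T.mul_mem hd₁T _), k % d₂,
      Nat.mod_lt _ hd₂0, ?_⟩
    have hx2 : d₂ * ((k / d₂) * d₁) + d₁ * (k % d₂) = d₁ * k := by
      conv_rhs => rw [← Nat.div_add_mod k d₂]
      ring
    have hx3 : d₂ * (t + (k / d₂) * d₁) = d₂ * t + d₂ * ((k / d₂) * d₁) := by ring
    omega
  -- d₁ = t + m for some t ∈ T
  have hd₁split : ∃ t ∈ T.carrier, d₁ = t + m := by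
    by_contra hcon
    exact hd₁Ap ⟨hd₁T, hcon⟩
  -- Apery characterization
  have hchar : ∀ x, x ∈ S.Apery S.mult ↔
      ∃ w ∈ T.Apery m, ∃ j, j < d₂ ∧ x = d₂ * w + d₁ * j := by
    intro x
    constructor
    · rintro ⟨hxS, hxnot⟩
      obtain ⟨u, hu, j, hj, rfl⟩ := hcanon x hxS
      refine ⟨u, ⟨hu, ?_⟩, j, hj, rfl⟩
      rintro ⟨v, hv, rfl⟩
      exact hxnot ⟨d₂ * v + d₁ * j, hSmem v hv j, by rw [hmultS]; ring⟩
    · rintro ⟨w, ⟨hwT, hwAp⟩, j, hj, rfl⟩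
      refine ⟨hSmem w hwT j, ?_⟩
      rintro ⟨s, hs, hseq⟩
      obtain ⟨u, hu, j', hj', rfl⟩ := hcanon s hs
      rw [hmultS] at hseq
      have heq : d₂ * w + d₁ * j = d₂ * (u + m) + d₁ * j' := by rw [hseq]; ring
      obtain ⟨hw, hjj⟩ := key_uniq hcop hd₂0 hj hj' heq
      exact hwAp ⟨u, hu, hw⟩
  -- the merged generator function
  set hfun : Fin ν ⊕ Unit → ℕ := Sum.elim (fun i => d₂ * g i) (fun _ => d₁) with hhfun
  have hfinj : Function.Injective hfun := by
    rintro (a | a) (b | b) hab <;> simp only [hhfun, Sum.elim_inl, Sum.elim_inr] at hab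
    · exact congrArg Sum.inl (hgmono.injective (Nat.eq_of_mul_eq_mul_left hd₂0 hab))
    · exact absurd ⟨g a, hab.symm⟩ hnd
    · exact absurd ⟨g b, hab⟩ hnd
    · rfl
  obtain ⟨g', e, hg'mono, hg'range, hge⟩ :=
    sorted_merge (n := ν + 1) (α := Fin ν ⊕ Unit) (by simp) hfun hfinj
  have hgel : ∀ i : Fin ν, g' (e (Sum.inl i)) = d₂ * g i := fun i => hge (Sum.inl i)
  have hger : g' (e (Sum.inr ())) = d₁ := hge (Sum.inr ())
  -- e (inl i0) = 0
  have hz : (⟨0, Nat.succ_pos ν⟩ : Fin (ν + 1)) = e (Sum.inl i0) := by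
    by_contra hne
    have hval : (e (Sum.inl i0)).val ≠ 0 := by
      intro h
      exact hne (Fin.ext (by simp [h]))
    have hlt0 : (⟨0, Nat.succ_pos ν⟩ : Fin (ν + 1)) < e (Sum.inl i0) := by
      rw [Fin.lt_def]
      simpa using Nat.pos_of_ne_zero hval
    have h1 : g' ⟨0, Nat.succ_pos ν⟩ < d₂ * m := by
      rw [← hg0, ← hgel i0]
      exact hg'mono hlt0
    have h2 : g' ⟨0, Nat.succ_pos ν⟩ ∈ Set.range hfun := by
      rw [← hg'range]; exact ⟨_, rfl⟩
    obtain ⟨x, hx⟩ := h2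
    rcases x with i | u
    · simp only [hhfun, Sum.elim_inl] at hx
      rw [← hx] at h1
      have h3 : g i0 ≤ g i := hgmono.monotone (by simp [hi0, Fin.le_def])
      rw [hg0] at h3
      have h4 : d₂ * m ≤ d₂ * g i := Nat.mul_le_mul_left d₂ h3
      omega
    · simp only [hhfun, Sum.elim_inr] at hx
      omega
  -- alpha computations
  have halphaL : ∀ i : Fin ν, S.alpha g' (e (Sum.inl i)) = T.alpha g i := by
    intro i
    unfold NumSgp.alpha
    congr 1
    ext n
    simp only [Set.mem_setOf_eq, hgel i]
    constructor
    · intro hn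
      rw [hchar] at hn
      obtain ⟨w, hw, j, hj, hx⟩ := hn
      have heq : d₂ * w + d₁ * j = d₂ * (n * g i) + d₁ * 0 := by rw [← hx]; ring
      obtain ⟨hw', hj'⟩ := key_uniq hcop hd₂0 hj hd₂0 heq
      rwa [hw'] at hw
    · intro hn
      rw [hchar]
      exact ⟨n * g i, hn, 0, hd₂0, by ring⟩
  have halphaR : S.alpha g' (e (Sum.inr ())) = d₂ - 1 := by
    unfold NumSgp.alpha
    rw [hger]
    have hset : {n | n * d₁ ∈ S.Apery S.mult} = Set.Iio d₂ := by
      ext n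
      simp only [Set.mem_setOf_eq, Set.mem_Iio]
      constructor
      · intro hn
        by_contra hge2
        push_neg at hge2
        rw [hchar] at hn
        obtain ⟨w, hw, j, hj, hx⟩ := hn
        have hq : 1 ≤ n / d₂ := (Nat.one_le_div_iff hd₂0).mpr hge2
        have hcan : d₂ * ((n / d₂) * d₁) + d₁ * (n % d₂) = d₁ * n := by
          conv_rhs => rw [← Nat.div_add_mod n d₂]
          ring
        have heq : d₂ * w + d₁ * j = d₂ * ((n / d₂) * d₁) + d₁ * (n % d₂) := by
          have : n * d₁ = d₁ * n := by ring
          omega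
        obtain ⟨hw', -⟩ := key_uniq hcop hd₂0 hj (Nat.mod_lt _ hd₂0) heq
        obtain ⟨t, ht, hteq⟩ := hd₁split
        apply hw.2
        obtain ⟨q', hq'⟩ : ∃ q', n / d₂ = q' + 1 := ⟨n / d₂ - 1, by omega⟩
        refine ⟨q' * d₁ + t, T.add_mem _ (T.mul_mem hd₁T _) _ ht, ?_⟩
        rw [hw', hq']
        have h7 : (q' + 1) * d₁ = q' * d₁ + d₁ := by ring
        omega
      · intro hn
        rw [hchar]
        refine ⟨0, ⟨T.zero_mem, ?_⟩, n, hn, by ring⟩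
        rintro ⟨t, ht, hteq⟩
        omega
    rw [hset]
    refine le_antisymm (csSup_le ⟨0, by simpa using hd₂0⟩ fun x hx => by
      simp only [Set.mem_Iio] at hx; omega) ?_
    exact le_csSup ⟨d₂, fun x hx => le_of_lt hx⟩ (by simp only [Set.mem_Iio]; omega)
  -- sum reindexing
  have hsum : ∀ lam' : Fin (ν + 1) → ℕ,
      ∑ k, lam' k * g' k =
        d₂ * (∑ i, lam' (e (Sum.inl i)) * g i) + d₁ * lam' (e (Sum.inr ())) := by
    intro lam'
    rw [← Equiv.sum_comp e (fun k => lam' k * g' k)]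
    rw [Fintype.sum_sum_type]
    simp only [hgel, hger, Finset.mul_sum]
    congr 1
    · apply Finset.sum_congr rfl
      intro i _
      ring
    · simp [mul_comm]
  -- MinGens of S
  have hminGens : S.MinGens g' := by
    refine ⟨hg'mono, ?_⟩
    rw [hg'range]
    ext s
    simp only [Set.mem_range, Set.mem_setOf_eq]
    constructor
    · rintro ⟨x, rfl⟩
      rcases x with i | u
      · -- d₂ * g i is a minimal generator of S
        simp only [hhfun, Sum.elim_inl]
        have hgi : T.IsMinGen (g i) := by
          have : g i ∈ Set.range g := ⟨i, rfl⟩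
          rwa [hgrange] at this
        have hgipos : 0 < g i := Nat.pos_of_ne_zero hgi.2.1
        refine ⟨by simpa using hSmem (g i) hgi.1 0, by positivity, ?_⟩
        rintro ⟨a, ha, b, hb, ha0, hb0, hab⟩
        obtain ⟨ta, hta, ka, rfl⟩ := hSmem' a ha
        obtain ⟨tb, htb, kb, rfl⟩ := hSmem' b hb
        have heq : d₂ * g i = d₂ * ta + d₂ * tb + (d₁ * ka + d₁ * kb) := by
          rw [hab]; ring
        have hdvd : d₂ ∣ d₁ * (ka + kb) := by
          have h1 : d₁ * (ka + kb) = d₁ * ka + d₁ * kb := by ring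
          have h2 : d₂ * (ta + tb) = d₂ * ta + d₂ * tb := by ring
          have h3 : d₁ * (ka + kb) = d₂ * g i - d₂ * (ta + tb) := by omega
          rw [h3]
          exact Nat.dvd_sub ⟨g i, rfl⟩ ⟨ta + tb, rfl⟩
        obtain ⟨c, hc⟩ := Nat.Coprime.dvd_of_dvd_mul_left hcop.symm hdvd
        have heq2 : g i = ta + tb + d₁ * c := by
          have h3 : d₂ * (ta + tb + d₁ * c) = d₂ * ta + d₂ * tb + d₂ * (d₁ * c) := by ring
          have h4 : d₂ * (d₁ * c) = d₁ * (d₂ * c) := by ring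
          have h5 : d₁ * (ka + kb) = d₁ * ka + d₁ * kb := by ring
          have h6 : d₁ * (ka + kb) = d₁ * (d₂ * c) := by rw [hc]
          have h2 : d₂ * g i = d₂ * (ta + tb + d₁ * c) := by omega
          exact Nat.eq_of_mul_eq_mul_left hd₂0 h2
        rcases Nat.eq_zero_or_pos c with rfl | hc0
        · have hka : ka = 0 := by omega
          have hkb : kb = 0 := by omega
          subst hka; subst hkb
          have htab : ta = 0 ∨ tb = 0 := by
            by_contra hcon
            push_neg at hcon
            exact hgi.2.2 ⟨ta, hta, tb, htb, hcon.1, hcon.2, by omega⟩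
          rcases htab with rfl | rfl
          · exact ha0 (by omega)
          · exact hb0 (by omega)
        · rcases Nat.eq_zero_or_pos (ta + tb) with htt | htt
          · rcases Nat.lt_or_ge c 2 with hc2 | hc2
            · apply hd₁gen
              have hc1 : c = 1 := by omega
              subst hc1
              have hgid : g i = d₁ := by
                have : d₁ * 1 = d₁ := by ring
                omega
              rwa [hgid] at hgi
            · apply hgi.2.2
              obtain ⟨c', rfl⟩ : ∃ c', c = c' + 2 := ⟨c - 2, by omega⟩
              refine ⟨d₁, hd₁T, d₁ * (c' + 1), T.mul_mem' hd₁T _, by omega, ?_, ?_⟩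
              · exact (Nat.mul_pos hd₁0 (by omega)).ne'
              · have : d₁ * (c' + 2) = d₁ + d₁ * (c' + 1) := by ring
                omega
          · apply hgi.2.2
            refine ⟨ta + tb, T.add_mem _ hta _ htb, d₁ * c, T.mul_mem' hd₁T _,
              by omega, (Nat.mul_pos hd₁0 hc0).ne', heq2⟩
      · -- d₁ is a minimal generator of S
        simp only [hhfun, Sum.elim_inr]
        refine ⟨by simpa using hSmem 0 T.zero_mem 1, by omega, ?_⟩
        rintro ⟨a, ha, b, hb, ha0, hb0, hab⟩
        obtain ⟨ta, hta, ka, rfl⟩ := hSmem' a ha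
        obtain ⟨tb, htb, kb, rfl⟩ := hSmem' b hb
        have heq : d₁ = d₂ * ta + d₂ * tb + (d₁ * ka + d₁ * kb) := by
          conv_lhs => rw [hab]
          ring
        rcases Nat.lt_or_ge (ka + kb) 1 with hk | hk
        · have hka : ka = 0 := by omega
          have hkb : kb = 0 := by omega
          subst hka; subst hkb
          apply hnd
          refine ⟨ta + tb, ?_⟩
          have : d₂ * (ta + tb) = d₂ * ta + d₂ * tb := by ring
          omega
        · rcases Nat.lt_or_ge (ka + kb) 2 with hk2 | hk2
          · have hk1 : ka + kb = 1 := by omega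
            have h1 : d₁ * ka + d₁ * kb = d₁ := by
              have h2 : d₁ * (ka + kb) = d₁ * ka + d₁ * kb := by ring
              have h3 : d₁ * (ka + kb) = d₁ * 1 := by rw [hk1]
              omega
            have h3 : d₂ * ta = 0 := by omega
            have h4 : d₂ * tb = 0 := by omega
            have hta0 : ta = 0 := by
              rcases Nat.mul_eq_zero.mp h3 with h | h <;> omega
            have htb0 : tb = 0 := by
              rcases Nat.mul_eq_zero.mp h4 with h | h <;> omega
            subst hta0; subst htb0
            have : ka = 0 ∨ kb = 0 := by omega
            rcases this with rfl | rfl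
            · exact ha0 (by omega)
            · exact hb0 (by omega)
          · obtain ⟨K', hK'⟩ : ∃ K', ka + kb = K' + 2 := ⟨ka + kb - 2, by omega⟩
            have h1 : d₁ * ka + d₁ * kb = d₁ * (K' + 2) := by rw [← hK']; ring
            have h2 : d₁ * (K' + 2) = d₁ * K' + d₁ + d₁ := by ring
            omega
    · -- converse: every minimal generator of S is in the range
      rintro ⟨hsS, hs0, hirr⟩
      obtain ⟨t, ht, k, rfl⟩ := hSmem' _ hsS
      rcases Nat.eq_zero_or_pos k with hk | hk
      · subst hk
        have ht0 : t ≠ 0 := by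
          rintro rfl; simp at hs0
        have htmin : T.IsMinGen t := by
          refine ⟨ht, ht0, ?_⟩
          rintro ⟨x, hx, y, hy, hx0, hy0, hxy⟩
          apply hirr
          refine ⟨d₂ * x, by simpa using hSmem x hx 0, d₂ * y, by simpa using hSmem y hy 0,
            (Nat.mul_pos hd₂0 (Nat.pos_of_ne_zero hx0)).ne',
            (Nat.mul_pos hd₂0 (Nat.pos_of_ne_zero hy0)).ne', ?_⟩
          rw [hxy]; ring
        have : t ∈ Set.range g := by rw [hgrange]; exact htmin
        obtain ⟨i, rfl⟩ := this
        exact ⟨Sum.inl i, by simp [hhfun]⟩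
      · -- k ≥ 1 : s = d₁
        have h1 : d₂ * t + d₁ * (k - 1) ∈ S.carrier := hSmem t ht (k - 1)
        have h2 : d₁ ∈ S.carrier := by simpa using hSmem 0 T.zero_mem 1
        obtain ⟨k', rfl⟩ : ∃ k', k = k' + 1 := ⟨k - 1, by omega⟩
        have hsplit : d₁ * (k' + 1) = d₁ * k' + d₁ := by ring
        have hk1 : d₂ * t + d₁ * k' = 0 := by
          by_contra hcon
          apply hirr
          refine ⟨d₂ * t + d₁ * k', ?_, d₁, h2, hcon, by omega, by omega⟩
          simpa using hSmem t ht k'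
        have h3 : d₂ * t = 0 := by omega
        have h4 : d₁ * k' = 0 := by omega
        have ht0 : t = 0 := by rcases Nat.mul_eq_zero.mp h3 with h | h <;> omega
        have hk0 : k' = 0 := by rcases Nat.mul_eq_zero.mp h4 with h | h <;> omega
        refine ⟨Sum.inr (), ?_⟩
        simp only [hhfun, Sum.elim_inr]
        subst ht0; subst hk0
        omega
  -- final rect equality
  refine ⟨ν + 1, g', hminGens, ?_⟩
  ext x
  rw [hchar x]
  constructor
  · rintro ⟨w, hw, j, hj, rfl⟩
    rw [hApT] at hw
    obtain ⟨lam, hlam0, hlamle, hlamsum⟩ := hw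
    refine ⟨fun k => Sum.elim lam (fun _ => j) (e.symm k), ?_, ?_, ?_⟩
    · intro k hk
      have hk0 : k = e (Sum.inl i0) := by
        rw [← hz]; exact Fin.ext hk
      rw [hk0]
      simp only [Equiv.symm_apply_apply, Sum.elim_inl]
      exact hlam0 i0 rfl
    · intro k
      obtain ⟨x, rfl⟩ : ∃ x, k = e x := ⟨e.symm k, (e.apply_symm_apply k).symm⟩
      rcases x with i | u
      · simp only [Equiv.symm_apply_apply, Sum.elim_inl, halphaL]
        exact hlamle i
      · simp only [Equiv.symm_apply_apply, Sum.elim_inr, halphaR]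
        omega
    · rw [hsum (fun k => Sum.elim lam (fun _ => j) (e.symm k))]
      simp only [Equiv.symm_apply_apply, Sum.elim_inl, Sum.elim_inr]
      rw [← hlamsum]
  · rintro ⟨lam', hlam'0, hlam'le, rfl⟩
    have hwmem : (∑ i, lam' (e (Sum.inl i)) * g i) ∈ T.Apery m := by
      rw [hApT]
      refine ⟨fun i => lam' (e (Sum.inl i)), ?_, ?_, rfl⟩
      · intro i hi
        have : i = i0 := Fin.ext hi
        subst this
        show lam' (e (Sum.inl i0)) = 0
        rw [← hz]
        exact hlam'0 _ rfl
      · intro i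
        have := hlam'le (e (Sum.inl i))
        rwa [halphaL i] at this
    refine ⟨∑ i, lam' (e (Sum.inl i)) * g i, hwmem, lam' (e (Sum.inr ())), ?_, ?_⟩
    · have := hlam'le (e (Sum.inr ()))
      rw [halphaR] at this
      omega
    · rw [hsum lam']
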